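/- For every positive integer n, let G_n be the tournament on vertex set {1,…,n} × {1,…,n} in which ((i,j),(k,ℓ)) is an edge if and only if (i < k and j ≠ ℓ) or (i > k and j = ℓ) or (i = k and j < ℓ). Then every acyclic subgraph of G_n has underlying chromatic number at most 3·n^{7/4}. -/

import Mathlib

attribute [local instance 10] Classical.propDecidable

/-- A directed-edge relation is acyclic if there is no directed cycle. -/
def IsAcyclicRel {V : Type*} (E : V → V → Prop) : Prop :=
  ∀ v, ¬ Relation.TransGen E v v

/-- The tournament `G_n` on vertex set `{1,…,n} × {1,…,n}` (modelled as
`Fin n × Fin n`) in which `((i,j),(k,ℓ))` is an edge iff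
`(i < k ∧ j ≠ ℓ) ∨ (i > k ∧ j = ℓ) ∨ (i = k ∧ j < ℓ)`. -/
def Gtour (n : ℕ) : Fin n × Fin n → Fin n × Fin n → Prop :=
  fun p q =>
    (p.1 < q.1 ∧ p.2 ≠ q.2) ∨ (q.1 < p.1 ∧ p.2 = q.2) ∨ (p.1 = q.1 ∧ p.2 < q.2)

namespace Stmt4Aux

variable {n : ℕ} (E' : Fin n × Fin n → Fin n × Fin n → Prop)

/-- rank of a vertex: number of strict `TransGen`-predecessors. -/
noncomputable def rnk (x : Fin n × Fin n) : ℕ :=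
  (Finset.univ.filter (fun y => Relation.TransGen E' y x)).card

/-- an injective encoding of vertices. -/
def enc (x : Fin n × Fin n) : ℕ := x.1.val * n + x.2.val

lemma enc_lt (x : Fin n × Fin n) : enc x < n * n := by
  have h1 := x.1.isLt; have h2 := x.2.isLt
  unfold enc; nlinarith

lemma decomp_inj {a b c d N : ℕ} (h : a * N + c = b * N + d)
    (hc : c < N) (hd : d < N) : a = b ∧ c = d := by
  have key : a = b := by
    by_contra hne
    rcases Nat.lt_or_ge a b with hlt | hge
    · have : a * N + N ≤ b * N := by
        calc a * N + N = (a + 1) * N := by ring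
        _ ≤ b * N := Nat.mul_le_mul_right N (Nat.succ_le_of_lt hlt)
      omega
    · have hlt : b < a := lt_of_le_of_ne hge (fun e => hne e.symm)
      have : b * N + N ≤ a * N := by
        calc b * N + N = (b + 1) * N := by ring
        _ ≤ a * N := Nat.mul_le_mul_right N (Nat.succ_le_of_lt hlt)
      omega
  exact ⟨key, by subst key; exact Nat.add_left_cancel h⟩

lemma enc_inj {x y : Fin n × Fin n} (h : enc x = enc y) : x = y := by
  have h2 := x.2.isLt; have h4 := y.2.isLt
  obtain ⟨e1, e2⟩ := decomp_inj h h2 h4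
  exact Prod.ext (Fin.ext e1) (Fin.ext e2)

/-- the "time" key. -/
noncomputable def key (x : Fin n × Fin n) : ℕ := rnk E' x * (n * n) + enc x

/-- the time (topological) strict linear order. -/
noncomputable def tlt (x y : Fin n × Fin n) : Prop := key E' x < key E' y

lemma key_inj {x y : Fin n × Fin n} (h : key E' x = key E' y) : x = y := by
  have hx := enc_lt x; have hy := enc_lt y
  obtain ⟨-, e2⟩ := decomp_inj h hx hy
  exact enc_inj e2

lemma tlt_irrefl (x : Fin n × Fin n) : ¬ tlt E' x x := lt_irrefl _

lemma tlt_trans {x y z : Fin n × Fin n} (h1 : tlt E' x y) (h2 : tlt E' y z) :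
    tlt E' x z := lt_trans h1 h2

lemma tlt_asymm {x y : Fin n × Fin n} (h1 : tlt E' x y) : ¬ tlt E' y x :=
  fun h2 => absurd (lt_trans h1 h2) (lt_irrefl _)

lemma tlt_total {x y : Fin n × Fin n} (h : x ≠ y) : tlt E' x y ∨ tlt E' y x := by
  rcases lt_trichotomy (key E' x) (key E' y) with h1 | h1 | h1
  · exact Or.inl h1
  · exact absurd (key_inj E' h1) h
  · exact Or.inr h1

lemma E'_tlt (hacyc : IsAcyclicRel E') {x y : Fin n × Fin n} (h : E' x y) :
    tlt E' x y := by
  have hsub : (Finset.univ.filter (fun z => Relation.TransGen E' z x)) ⊆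
      (Finset.univ.filter (fun z => Relation.TransGen E' z y)) := by
    intro z hz
    simp only [Finset.mem_filter, Finset.mem_univ, true_and] at hz ⊢
    exact hz.tail h
  have hxy : x ∈ (Finset.univ.filter (fun z => Relation.TransGen E' z y)) := by
    simp only [Finset.mem_filter, Finset.mem_univ, true_and]
    exact Relation.TransGen.single h
  have hxx : x ∉ (Finset.univ.filter (fun z => Relation.TransGen E' z x)) := by
    simp only [Finset.mem_filter, Finset.mem_univ, true_and]
    exact hacyc x
  have hlt : rnk E' x < rnk E' y :=
    Finset.card_lt_card (Finset.ssubset_iff_of_subset hsub |>.mpr ⟨x, hxy, hxx⟩)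
  have hex := enc_lt x
  show rnk E' x * (n * n) + enc x < rnk E' y * (n * n) + enc y
  have : rnk E' x * (n * n) + (n * n) ≤ rnk E' y * (n * n) := by
    calc rnk E' x * (n * n) + (n * n) = (rnk E' x + 1) * (n * n) := by ring
    _ ≤ rnk E' y * (n * n) := Nat.mul_le_mul_right _ (Nat.succ_le_of_lt hlt)
  omega

/-- lexicographic order on vertices. -/
def lexlt (x y : Fin n × Fin n) : Prop :=
  x.1 < y.1 ∨ (x.1 = y.1 ∧ x.2 < y.2)

lemma lexlt_trans {x y z : Fin n × Fin n} (h1 : lexlt x y) (h2 : lexlt y z) :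
    lexlt x z := by
  unfold lexlt at *
  rcases h1 with h1 | ⟨h1, h1'⟩ <;> rcases h2 with h2 | ⟨h2, h2'⟩
  · exact Or.inl (lt_trans h1 h2)
  · exact Or.inl (h2 ▸ h1)
  · exact Or.inl (h1 ▸ h2)
  · exact Or.inr ⟨h1.trans h2, lt_trans h1' h2'⟩

lemma lexlt_irrefl (x : Fin n × Fin n) : ¬ lexlt x x := by
  unfold lexlt; simp

lemma Gtour_asymm {x y : Fin n × Fin n} (h1 : Gtour n x y) (h2 : Gtour n y x) :
    False := by
  unfold Gtour at h1 h2
  simp only [Fin.lt_def, Fin.ext_iff, ne_eq] at h1 h2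
  omega

/-- Pairwise-backward sets: along time, same column goes up, different columns
go lex-down.  Such sets contain no `E'`-edge at all. -/
def BSet (S : Finset (Fin n × Fin n)) : Prop :=
  ∀ x ∈ S, ∀ y ∈ S, tlt E' x y →
    ((x.2 = y.2 ∧ x.1 < y.1) ∨ (x.2 ≠ y.2 ∧ lexlt y x))

lemma BSet_subset {S T : Finset (Fin n × Fin n)} (h : BSet E' T) (hs : S ⊆ T) :
    BSet E' S := fun x hx y hy => h x (hs hx) y (hs hy)

lemma back_Gtour {x y : Fin n × Fin n}
    (h : (x.2 = y.2 ∧ x.1 < y.1) ∨ (x.2 ≠ y.2 ∧ lexlt y x)) : Gtour n y x := by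
  unfold Gtour
  rcases h with ⟨h1, h2⟩ | ⟨h1, h2⟩
  · exact Or.inr (Or.inl ⟨h2, h1.symm⟩)
  · rcases h2 with h2 | ⟨h2, h3⟩
    · exact Or.inl ⟨h2, fun e => h1 e.symm⟩
    · exact Or.inr (Or.inr ⟨h2, h3⟩)

lemma BSet_indep (hsub : ∀ u v, E' u v → Gtour n u v) (hacyc : IsAcyclicRel E')
    {S : Finset (Fin n × Fin n)} (hS : BSet E' S) :
    ∀ x ∈ S, ∀ y ∈ S, x ≠ y → ¬ E' x y := by
  intro x hx y hy hne hE
  rcases tlt_total E' hne with ht | ht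
  · exact Gtour_asymm (hsub _ _ hE) (back_Gtour (hS x hx y hy ht))
  · exact tlt_asymm E' (E'_tlt E' hacyc hE) ht

/-! ### Height machinery -/

/-- height of `x` relative to a predicate on finsets: the largest cardinality of
a subset of `U` satisfying `P x`. -/
noncomputable def hgt (U : Finset (Fin n × Fin n))
    (P : Fin n × Fin n → Finset (Fin n × Fin n) → Prop) (x : Fin n × Fin n) : ℕ :=
  ((U.powerset.filter (P x)).image Finset.card).sup id

lemma le_hgt {U S : Finset (Fin n × Fin n)} {P} {x} (hS : S ⊆ U) (hP : P x S) :
    S.card ≤ hgt U P x := by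
  apply Finset.le_sup (f := id)
  exact Finset.mem_image_of_mem _ (Finset.mem_filter.mpr
    ⟨Finset.mem_powerset.mpr hS, hP⟩)

lemma hgt_le {U : Finset (Fin n × Fin n)} {P} {x} {c : ℕ}
    (h : ∀ S ⊆ U, P x S → S.card ≤ c) : hgt U P x ≤ c := by
  apply Finset.sup_le
  intro b hb
  obtain ⟨S, hS, rfl⟩ := Finset.mem_image.mp hb
  obtain ⟨h1, h2⟩ := Finset.mem_filter.mp hS
  exact h S (Finset.mem_powerset.mp h1) h2

lemma hgt_attained {U : Finset (Fin n × Fin n)} {P} {x} (hP0 : P x ∅) :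
    ∃ S ⊆ U, P x S ∧ S.card = hgt U P x := by
  have hne : ((U.powerset.filter (P x)).image Finset.card).Nonempty := by
    refine ⟨0, Finset.mem_image.mpr ⟨∅, Finset.mem_filter.mpr
      ⟨Finset.mem_powerset.mpr (Finset.empty_subset _), hP0⟩, rfl⟩⟩
  obtain ⟨b, hb, hsup⟩ := Finset.exists_mem_eq_sup _ hne id
  obtain ⟨S, hS, rfl⟩ := Finset.mem_image.mp hb
  obtain ⟨h1, h2⟩ := Finset.mem_filter.mp hS
  exact ⟨S, Finset.mem_powerset.mp h1, h2, hsup.symm⟩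

/-- ascending same-column chains ending at `x`. -/
def PA (x : Fin n × Fin n) (S : Finset (Fin n × Fin n)) : Prop :=
  (∀ y ∈ S, tlt E' y x ∧ y.2 = x.2 ∧ y.1 < x.1) ∧
  (∀ y ∈ S, ∀ z ∈ S, tlt E' y z → y.1 < z.1)

/-- rainbow chains (time-increasing, lex-decreasing, distinct columns) ending
at `x`. -/
def PR (x : Fin n × Fin n) (S : Finset (Fin n × Fin n)) : Prop :=
  (∀ y ∈ S, tlt E' y x ∧ y.2 ≠ x.2 ∧ lexlt x y) ∧
  (∀ y ∈ S, ∀ z ∈ S, tlt E' y z → (y.2 ≠ z.2 ∧ lexlt z y))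

lemma PA_empty (x) : PA E' x ∅ := by constructor <;> intro y hy <;> simp at hy

lemma PR_empty (x) : PR E' x ∅ := by constructor <;> intro y hy <;> simp at hy

lemma PA_BSet {x : Fin n × Fin n} {S : Finset (Fin n × Fin n)} (h : PA E' x S) :
    BSet E' (insert x S) ∧ (insert x S).card = S.card + 1 := by
  have hxS : x ∉ S := fun hx => absurd (h.1 x hx).2.2 (lt_irrefl _)
  constructor
  · intro a ha b hb hab
    rcases Finset.mem_insert.mp ha with hax | haS
    · subst hax
      rcases Finset.mem_insert.mp hb with hbx | hbS
      · subst hbx; exact absurd hab (tlt_irrefl E' _)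
      · exact absurd hab (tlt_asymm E' (h.1 b hbS).1)
    · rcases Finset.mem_insert.mp hb with hbx | hbS
      · subst hbx
        exact Or.inl ⟨(h.1 a haS).2.1, (h.1 a haS).2.2⟩
      · exact Or.inl ⟨(h.1 a haS).2.1.trans (h.1 b hbS).2.1.symm,
          h.2 a haS b hbS hab⟩
  · rw [Finset.card_insert_of_notMem hxS]

lemma PR_BSet {x : Fin n × Fin n} {S : Finset (Fin n × Fin n)} (h : PR E' x S) :
    BSet E' (insert x S) ∧ (insert x S).card = S.card + 1 := by
  have hxS : x ∉ S := fun hx => absurd (h.1 x hx).2.2 (lexlt_irrefl _)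
  constructor
  · intro a ha b hb hab
    rcases Finset.mem_insert.mp ha with hax | haS
    · subst hax
      rcases Finset.mem_insert.mp hb with hbx | hbS
      · subst hbx; exact absurd hab (tlt_irrefl E' _)
      · exact absurd hab (tlt_asymm E' (h.1 b hbS).1)
    · rcases Finset.mem_insert.mp hb with hbx | hbS
      · subst hbx
        exact Or.inr ⟨(h.1 a haS).2.1, (h.1 a haS).2.2⟩
      · exact Or.inr (h.2 a haS b hbS hab)
  · rw [Finset.card_insert_of_notMem hxS]


/-- The key extraction lemma: any large set contains an `s`-element
pairwise-backward set. -/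
lemma extraction (hn : 0 < n) {s : ℕ} (hs : 1 ≤ s)
    (U : Finset (Fin n × Fin n))
    (hU : (s - 1) * (s - 1) * s * n < U.card) :
    ∃ S ⊆ U, S.card = s ∧ BSet E' S := by
  by_contra hcon
  have HB : ∀ S ⊆ U, BSet E' S → S.card < s := by
    intro S hSU hBS
    rcases Nat.lt_or_ge S.card s with h | h
    · exact h
    · obtain ⟨T, hTS, hTcard⟩ := Finset.exists_subset_card_eq h
      exact absurd ⟨T, hTS.trans hSU, hTcard, BSet_subset E' hBS hTS⟩ hcon
  -- the case s = 1 is immediate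
  rcases Nat.eq_or_lt_of_le hs with hs1 | hs2
  · have hUne : U.Nonempty := Finset.card_pos.mp (by omega)
    obtain ⟨x, hx⟩ := hUne
    have : ({x} : Finset _).card < s :=
      HB {x} (Finset.singleton_subset_iff.mpr hx)
        (by intro a ha b hb hab
            rw [Finset.mem_singleton] at ha hb
            subst ha; subst hb; exact absurd hab (tlt_irrefl E' _))
    simp at this; omega
  set σ := s - 1 with hσ
  have hσ1 : 1 ≤ σ := by omega
  have hσs : σ + 1 = s := by omega
  -- heights for ascending same-column chains
  set ha : Fin n × Fin n → ℕ := hgt U (PA E') with ha_def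
  have ha_lt : ∀ x ∈ U, ha x < σ := by
    intro x hx
    have : ha x ≤ σ - 1 := by
      apply hgt_le
      intro S hSU hPA
      obtain ⟨hB, hc⟩ := PA_BSet E' hPA
      have := HB (insert x S) (Finset.insert_subset hx hSU) hB
      omega
    omega
  -- fiber bound
  have fiber_bound : ∀ k : ℕ, (U.filter (fun x => ha x = k)).card ≤ σ * ((σ + 1) * n) := by
    intro k
    set W := U.filter (fun x => ha x = k) with hW
    have hWU : W ⊆ U := Finset.filter_subset _ _
    -- reduced property: within W, same column descends along time
    have hred : ∀ x ∈ W, ∀ y ∈ W, tlt E' x y → x.2 = y.2 → y.1 < x.1 := by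
      intro x hxW y hyW ht hcol
      rcases lt_trichotomy x.1 y.1 with h1 | h1 | h1
      · exfalso
        obtain ⟨S, hSU, hPA, hScard⟩ := hgt_attained (U := U) (PA_empty E' x)
        have hky : ha y = k := (Finset.mem_filter.mp hyW).2
        have hkx : ha x = k := (Finset.mem_filter.mp hxW).2
        have hxU : x ∈ U := hWU hxW
        have hnew : PA E' y (insert x S) := by
          constructor
          · intro z hz
            rcases Finset.mem_insert.mp hz with hzx | hzS
            · subst hzx; exact ⟨ht, hcol, h1⟩
            · obtain ⟨ht', hc', hl'⟩ := hPA.1 z hzS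
              exact ⟨tlt_trans E' ht' ht, hc'.trans hcol, lt_trans hl' h1⟩
          · intro a haz b hbz hab
            rcases Finset.mem_insert.mp haz with hax | haS
            · subst hax
              rcases Finset.mem_insert.mp hbz with hbx | hbS
              · subst hbx; exact absurd hab (tlt_irrefl E' _)
              · exact absurd hab (tlt_asymm E' (hPA.1 b hbS).1)
            · rcases Finset.mem_insert.mp hbz with hbx | hbS
              · subst hbx; exact (hPA.1 a haS).2.2
              · exact hPA.2 a haS b hbS hab
        have hxS : x ∉ S := fun hmem => absurd (hPA.1 x hmem).2.2 (lt_irrefl _)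
        have hle := le_hgt (U := U) (Finset.insert_subset hxU hSU) hnew
        rw [Finset.card_insert_of_notMem hxS, hScard] at hle
        have hky' : hgt U (PA E') y = k := hky
        have hkx' : hgt U (PA E') x = k := hkx
        omega
      · exfalso
        have : x = y := Prod.ext h1 (by exact hcol)
        subst this; exact tlt_irrefl E' _ ht
      · exact h1
    -- rho heights within W
    set rho : Fin n × Fin n → ℕ := hgt W (PR E') with rho_def
    have rho_lt : ∀ x ∈ W, rho x < σ := by
      intro x hx
      have : rho x ≤ σ - 1 := by
        apply hgt_le
        intro S hSW hPR
        obtain ⟨hB, hc⟩ := PR_BSet E' hPR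
        have := HB (insert x S)
          (Finset.insert_subset (hWU hx) (hSW.trans hWU)) hB
        omega
      omega
    -- layer bound
    have layer_bound : ∀ r : ℕ, r < σ →
        (W.filter (fun x => rho x = r)).card ≤ n + n * σ := by
      intro r hrσ
      set L := W.filter (fun x => rho x = r) with hL
      have hLW : L ⊆ W := Finset.filter_subset _ _
      set isF : Fin n × Fin n → Prop :=
        fun x => ∀ w ∈ L, w.2 = x.2 → ¬ tlt E' w x with hisF
      have hsplit := Finset.card_filter_add_card_filter_not
        (s := L) (p := isF)
      have hF : (L.filter isF).card ≤ n := by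
        have : (L.filter isF).card ≤ (Finset.univ : Finset (Fin n)).card := by
          apply Finset.card_le_card_of_injOn (fun x => x.2)
          · intro a _; exact Finset.mem_univ _
          · intro a haF b hbF hab
            by_contra hne
            have haL : a ∈ L := Finset.mem_of_mem_filter _ haF
            have hbL : b ∈ L := Finset.mem_of_mem_filter _ hbF
            rcases tlt_total E' hne with h | h
            · exact (Finset.mem_filter.mp hbF).2 a haL hab h
            · exact (Finset.mem_filter.mp haF).2 b hbL hab.symm h
        simpa using this
      have hNF : (L.filter (fun x => ¬ isF x)).card ≤ n * σ := by
        set NF := L.filter (fun x => ¬ isF x) with hNF_def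
        have hfib : NF.card =
            ∑ v ∈ (Finset.univ : Finset (Fin n)),
              (NF.filter (fun x => x.1 = v)).card :=
          Finset.card_eq_sum_card_fiberwise (fun x _ => Finset.mem_univ x.1)
        have hval : ∀ v : Fin n, (NF.filter (fun x => x.1 = v)).card ≤ σ := by
          intro v
          by_contra hbig
          push_neg at hbig
          set T := NF.filter (fun x => x.1 = v) with hT
          have hTL : T ⊆ L := (Finset.filter_subset _ _).trans (Finset.filter_subset _ _)
          have hTne : T.Nonempty := Finset.card_pos.mp (by omega)
          obtain ⟨x₀, hx₀T, hmin⟩ := Finset.exists_min_image T (key E') hTne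
          have hx₀NF : x₀ ∈ NF := Finset.mem_of_mem_filter _ hx₀T
          have hx₀L : x₀ ∈ L := Finset.mem_of_mem_filter _ hx₀NF
          have hx₀v : x₀.1 = v := (Finset.mem_filter.mp hx₀T).2
          have hx₀nf : ¬ isF x₀ := (Finset.mem_filter.mp hx₀NF).2
          have hx₀nf2 : ∃ w ∈ L, w.2 = x₀.2 ∧ tlt E' w x₀ := by
            by_contra hc2
            push_neg at hc2
            exact hx₀nf (fun w hw hcol => hc2 w hw hcol)
          obtain ⟨w, hwL, hwcol, hwt⟩ := hx₀nf2
          have hwW : w ∈ W := hLW hwL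
          have hx₀W : x₀ ∈ W := hLW hx₀L
          have hw1 : x₀.1 < w.1 := hred w hwW x₀ hx₀W hwt hwcol
          have hrw : rho w = r := (Finset.mem_filter.mp hwL).2
          obtain ⟨S, hSW, hPR, hScard⟩ := hgt_attained (U := W) (PR_empty E' w)
          -- every other element of T has its column among the columns of S
          set T' := T.erase x₀ with hT'
          have hT'claim : ∀ y ∈ T', ∃ z ∈ S, z.2 = y.2 := by
            intro y hyT'
            have hyT : y ∈ T := Finset.mem_of_mem_erase hyT'
            have hyx₀ : y ≠ x₀ := Finset.ne_of_mem_erase hyT'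
            have hyv : y.1 = v := (Finset.mem_filter.mp hyT).2
            have hyL : y ∈ L := hTL hyT
            have hry : rho y = r := (Finset.mem_filter.mp hyL).2
            have htx₀y : tlt E' x₀ y := by
              have hle := hmin y hyT
              have : key E' x₀ ≠ key E' y := fun e => hyx₀ (key_inj E' e).symm
              exact lt_of_le_of_ne hle this
            have htwy : tlt E' w y := tlt_trans E' hwt htx₀y
            have hycw : y.2 ≠ w.2 := by
              intro e
              apply hyx₀
              exact Prod.ext (hyv.trans hx₀v.symm) (e.trans hwcol)
            have hlyw : lexlt y w := Or.inl (by rw [hyv, ← hx₀v]; exact hw1)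
            by_contra hno
            push_neg at hno
            have hnew : PR E' y (insert w S) := by
              constructor
              · intro z hz
                rcases Finset.mem_insert.mp hz with hzw | hzS
                · subst hzw; exact ⟨htwy, fun e => hycw e.symm, hlyw⟩
                · obtain ⟨ht', hc', hl'⟩ := hPR.1 z hzS
                  exact ⟨tlt_trans E' ht' htwy,
                    hno z hzS,
                    lexlt_trans hlyw hl'⟩
              · intro a haz b hbz hab
                rcases Finset.mem_insert.mp haz with haw | haS
                · subst haw
                  rcases Finset.mem_insert.mp hbz with hbw | hbS
                  · subst hbw; exact absurd hab (tlt_irrefl E' _)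
                  · exact absurd hab (tlt_asymm E' (hPR.1 b hbS).1)
                · rcases Finset.mem_insert.mp hbz with hbw | hbS
                  · subst hbw
                    exact ⟨(hPR.1 a haS).2.1, (hPR.1 a haS).2.2⟩
                  · exact hPR.2 a haS b hbS hab
            have hwS : w ∉ S := fun hmem =>
              absurd (hPR.1 w hmem).2.2 (lexlt_irrefl _)
            have hwW' : insert w S ⊆ W := Finset.insert_subset hwW hSW
            have hle := le_hgt (U := W) hwW' hnew
            rw [Finset.card_insert_of_notMem hwS, hScard] at hle
            have hrw' : hgt W (PR E') w = r := hrw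
            have hry' : hgt W (PR E') y = r := hry
            omega
          -- counting
          have himg : T'.image (fun x => x.2) ⊆ S.image (fun x => x.2) := by
            intro c hc
            obtain ⟨y, hyT', rfl⟩ := Finset.mem_image.mp hc
            obtain ⟨z, hzS, hz2⟩ := hT'claim y hyT'
            exact Finset.mem_image.mpr ⟨z, hzS, hz2⟩
          have hT'card : (T'.image (fun x => x.2)).card = T'.card := by
            apply Finset.card_image_of_injOn
            intro a haT' b hbT' hab
            have ha1 : a.1 = v := (Finset.mem_filter.mp
              (Finset.mem_of_mem_erase haT')).2
            have hb1 : b.1 = v := (Finset.mem_filter.mp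
              (Finset.mem_of_mem_erase hbT')).2
            exact Prod.ext (ha1.trans hb1.symm) hab
          have h1 : T'.card ≤ S.card := by
            rw [← hT'card]
            exact le_trans (Finset.card_le_card himg) (Finset.card_image_le)
          have h2 : T'.card = T.card - 1 := Finset.card_erase_of_mem hx₀T
          have hrw2 : hgt W (PR E') w = r := hrw
          omega
        calc NF.card = _ := hfib
          _ ≤ ∑ _v ∈ (Finset.univ : Finset (Fin n)), σ :=
            Finset.sum_le_sum (fun v _ => hval v)
          _ = n * σ := by simp [Finset.sum_const, Finset.card_univ, mul_comm]
      omega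
    -- sum the layers
    have hWsum : W.card =
        ∑ r ∈ Finset.range σ, (W.filter (fun x => rho x = r)).card :=
      Finset.card_eq_sum_card_fiberwise
        (fun x hx => Finset.mem_range.mpr (rho_lt x hx))
    calc W.card = _ := hWsum
      _ ≤ ∑ _r ∈ Finset.range σ, (n + n * σ) :=
        Finset.sum_le_sum (fun r hr => layer_bound r (Finset.mem_range.mp hr))
      _ = σ * (n + n * σ) := by simp [Finset.sum_const, mul_comm]
      _ = σ * ((σ + 1) * n) := by ring
  -- sum the fibers
  have hUsum : U.card =
      ∑ k ∈ Finset.range σ, (U.filter (fun x => ha x = k)).card :=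
    Finset.card_eq_sum_card_fiberwise
      (fun x hx => Finset.mem_range.mpr (ha_lt x hx))
  have : U.card ≤ σ * (σ * ((σ + 1) * n)) := by
    calc U.card = _ := hUsum
      _ ≤ ∑ _k ∈ Finset.range σ, σ * ((σ + 1) * n) :=
        Finset.sum_le_sum (fun k _ => fiber_bound k)
      _ = σ * (σ * ((σ + 1) * n)) := by simp [Finset.sum_const, mul_comm]
  have hfin : σ * (σ * ((σ + 1) * n)) = σ * σ * s * n := by
    rw [hσs]; ring
  omega

/-- Peeling: cover any set by independent sets. -/
lemma cover (hn : 0 < n) (hsub : ∀ u v, E' u v → Gtour n u v)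
    (hacyc : IsAcyclicRel E') {s : ℕ} (hs : 1 ≤ s) :
    ∀ m (U : Finset (Fin n × Fin n)), U.card ≤ m →
    ∃ F : Finset (Finset (Fin n × Fin n)),
      (∀ S ∈ F, ∀ x ∈ S, ∀ y ∈ S, x ≠ y → ¬ E' x y) ∧
      (∀ v ∈ U, ∃ S ∈ F, v ∈ S) ∧
      F.card ≤ (s - 1) * (s - 1) * s * n + U.card / s := by
  intro m
  induction m with
  | zero =>
    intro U hU
    refine ⟨∅, by simp, ?_, by simp⟩
    intro v hv
    rw [Finset.card_eq_zero.mp (Nat.le_zero.mp hU)] at hv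
    simp at hv
  | succ m ih =>
    intro U hU
    by_cases hBig : (s - 1) * (s - 1) * s * n < U.card
    · obtain ⟨S, hSU, hScard, hSB⟩ := extraction E' hn hs U hBig
      have hsU : s ≤ U.card := hScard ▸ Finset.card_le_card hSU
      have hrec : (U \ S).card ≤ m := by
        rw [Finset.card_sdiff_of_subset hSU, hScard]
        omega
      obtain ⟨F', hF1, hF2, hF3⟩ := ih (U \ S) hrec
      refine ⟨insert S F', ?_, ?_, ?_⟩
      · intro T hT
        rcases Finset.mem_insert.mp hT with hTeq | hTF
        · subst hTeq; exact BSet_indep E' hsub hacyc hSB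
        · exact hF1 T hTF
      · intro v hv
        by_cases hvS : v ∈ S
        · exact ⟨S, Finset.mem_insert_self _ _, hvS⟩
        · obtain ⟨T, hTF, hvT⟩ := hF2 v (Finset.mem_sdiff.mpr ⟨hv, hvS⟩)
          exact ⟨T, Finset.mem_insert_of_mem hTF, hvT⟩
      · have hdiv : U.card / s = (U.card - s) / s + 1 :=
          Nat.div_eq_sub_div (by omega) hsU
        calc (insert S F').card ≤ F'.card + 1 := Finset.card_insert_le _ _
          _ ≤ ((s - 1) * (s - 1) * s * n + (U \ S).card / s) + 1 := by omega
          _ = (s - 1) * (s - 1) * s * n + ((U.card - s) / s + 1) := by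
              rw [Finset.card_sdiff_of_subset hSU, hScard]; ring
          _ = (s - 1) * (s - 1) * s * n + U.card / s := by rw [← hdiv]
    · refine ⟨U.image (fun v => ({v} : Finset (Fin n × Fin n))), ?_, ?_, ?_⟩
      · intro T hT x hx y hy hne
        obtain ⟨v, _, rfl⟩ := Finset.mem_image.mp hT
        rw [Finset.mem_singleton] at hx hy
        exact absurd (hx.trans hy.symm) hne
      · intro v hv
        exact ⟨{v}, Finset.mem_image_of_mem _ hv, Finset.mem_singleton_self v⟩
      · calc (U.image (fun v => ({v} : Finset (Fin n × Fin n)))).card ≤ U.card :=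
            Finset.card_image_le
          _ ≤ (s - 1) * (s - 1) * s * n := by omega
          _ ≤ _ := Nat.le_add_right _ _

end Stmt4Aux

/-- Every acyclic subgraph of `G_n` has underlying chromatic number at most
`3·n^(7/4)`. -/
theorem stmt4 (n : ℕ) (hn : 0 < n) (E' : Fin n × Fin n → Fin n × Fin n → Prop)
    (hsub : ∀ u v, E' u v → Gtour n u v) (hacyc : IsAcyclicRel E') :
    (SimpleGraph.fromRel E').chromaticNumber
      ≤ (⌊3 * (n : ℝ) ^ ((7 : ℝ) / 4)⌋₊ : ℕ∞) := by
  classical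
  set x : ℝ := (n : ℝ) ^ ((1 : ℝ)/4) with hx_def
  have hn0 : (0 : ℝ) < (n : ℝ) := by exact_mod_cast hn
  have hn1 : (1 : ℝ) ≤ (n : ℝ) := by exact_mod_cast hn
  have hx1 : (1 : ℝ) ≤ x := by
    have h := Real.rpow_le_rpow (le_of_lt one_pos) hn1
      (by norm_num : (0:ℝ) ≤ (1:ℝ)/4)
    rwa [Real.one_rpow] at h
  have hx0 : (0 : ℝ) < x := lt_of_lt_of_le one_pos hx1
  set s : ℕ := ⌈x⌉₊ with hs_def
  have hs1 : 1 ≤ s := Nat.one_le_ceil_iff.mpr hx0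
  obtain ⟨F, hind, hcov, hcard⟩ :=
    Stmt4Aux.cover E' hn hsub hacyc hs1 (Finset.univ.card) Finset.univ le_rfl
  have hcov' : ∀ v : Fin n × Fin n, ∃ S ∈ F, v ∈ S :=
    fun v => hcov v (Finset.mem_univ v)
  let f : Fin n × Fin n → {S // S ∈ F} :=
    fun v => ⟨(hcov' v).choose, (hcov' v).choose_spec.1⟩
  have hfmem : ∀ v, v ∈ (f v).1 := fun v => (hcov' v).choose_spec.2
  have coloring : (SimpleGraph.fromRel E').Coloring {S // S ∈ F} := by
    refine SimpleGraph.Coloring.mk f ?_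
    intro u v hadj heq
    obtain ⟨hne, hor⟩ := hadj
    have hu := hfmem u
    have hv := hfmem v
    rw [heq] at hu
    have hI := hind (f v).1 (f v).2
    rcases hor with h | h
    · exact hI u hu v hv hne h
    · exact hI v hv u hu (Ne.symm hne) h
  have hcolorable : (SimpleGraph.fromRel E').Colorable F.card := by
    have := coloring.colorable
    rwa [Fintype.card_coe] at this
  refine le_trans hcolorable.chromaticNumber_le ?_
  rw [Nat.cast_le]
  refine le_trans hcard ?_
  apply Nat.le_floor
  -- the analytic estimate
  have hcardV : (Finset.univ : Finset (Fin n × Fin n)).card = n * n := by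
    simp [Finset.card_univ]
  rw [hcardV]
  have hsx : x ≤ (s : ℝ) := Nat.le_ceil x
  have hsx1 : (s : ℝ) < x + 1 := Nat.ceil_lt_add_one (le_of_lt hx0)
  have hcast : (((s - 1) * (s - 1) * s * n + n * n / s : ℕ) : ℝ)
      = ((s : ℝ) - 1) * ((s : ℝ) - 1) * (s : ℝ) * (n : ℝ)
        + ((n * n / s : ℕ) : ℝ) := by
    push_cast [Nat.cast_sub hs1]
    ring
  rw [hcast]
  have e2 : x * x = (n : ℝ) ^ ((2 : ℝ)/4) := by
    rw [hx_def, ← Real.rpow_add hn0]; norm_num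
  have e3 : x * x * x = (n : ℝ) ^ ((3 : ℝ)/4) := by
    rw [e2, hx_def, ← Real.rpow_add hn0]; norm_num
  have e7 : (n : ℝ) ^ ((3 : ℝ)/4) * (n : ℝ) = (n : ℝ) ^ ((7 : ℝ)/4) := by
    nth_rewrite 2 [show (n:ℝ) = (n:ℝ) ^ ((1:ℝ)) from (Real.rpow_one _).symm]
    rw [← Real.rpow_add hn0]; norm_num
  have e6 : (n : ℝ) ^ ((2 : ℝ)/4) * (n : ℝ) = (n : ℝ) ^ ((6 : ℝ)/4) := by
    nth_rewrite 2 [show (n:ℝ) = (n:ℝ) ^ ((1:ℝ)) from (Real.rpow_one _).symm]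
    rw [← Real.rpow_add hn0]; norm_num
  have hA : ((s : ℝ) - 1) * ((s : ℝ) - 1) * (s : ℝ) * (n : ℝ)
      ≤ (n : ℝ) ^ ((7 : ℝ)/4) + (n : ℝ) ^ ((6 : ℝ)/4) := by
    have hs1' : (0 : ℝ) ≤ (s : ℝ) - 1 := by
      have : (1 : ℝ) ≤ (s : ℝ) := by exact_mod_cast hs1
      linarith
    have hb1 : (s : ℝ) - 1 ≤ x := by linarith
    have step : ((s : ℝ) - 1) * ((s : ℝ) - 1) * (s : ℝ)
        ≤ x * x * (x + 1) := by
      have h1 : ((s : ℝ) - 1) * ((s : ℝ) - 1) ≤ x * x :=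
        mul_le_mul hb1 hb1 hs1' (le_of_lt hx0)
      have h2 : (s : ℝ) ≤ x + 1 := le_of_lt hsx1
      have h3 : (0 : ℝ) ≤ ((s:ℝ) - 1) * ((s:ℝ) - 1) :=
        mul_nonneg hs1' hs1'
      calc ((s : ℝ) - 1) * ((s : ℝ) - 1) * (s : ℝ)
          ≤ ((s : ℝ) - 1) * ((s : ℝ) - 1) * (x + 1) := by
            apply mul_le_mul_of_nonneg_left h2 h3
        _ ≤ x * x * (x + 1) := by
            apply mul_le_mul_of_nonneg_right h1
            linarith
    calc ((s : ℝ) - 1) * ((s : ℝ) - 1) * (s : ℝ) * (n : ℝ)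
        ≤ x * x * (x + 1) * (n : ℝ) := by
          apply mul_le_mul_of_nonneg_right step (le_of_lt hn0)
      _ = x * x * x * (n : ℝ) + x * x * (n : ℝ) := by ring
      _ = (n : ℝ) ^ ((7 : ℝ)/4) + (n : ℝ) ^ ((6 : ℝ)/4) := by
          rw [e3, e2, e7, e6]
  have hD : ((n * n / s : ℕ) : ℝ) ≤ (n : ℝ) ^ ((7 : ℝ)/4) := by
    have h1 : ((n * n / s : ℕ) : ℝ) ≤ ((n * n : ℕ) : ℝ) / (s : ℝ) :=
      Nat.cast_div_le
    have h2 : ((n * n : ℕ) : ℝ) / (s : ℝ) ≤ ((n * n : ℕ) : ℝ) / x := by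
      apply div_le_div_of_nonneg_left _ hx0 hsx
      positivity
    have h3 : ((n * n : ℕ) : ℝ) / x = (n : ℝ) ^ ((7 : ℝ)/4) := by
      push_cast
      rw [show (n:ℝ) * (n:ℝ) = (n:ℝ) ^ ((8:ℝ)/4) by
        rw [show (8:ℝ)/4 = 1 + 1 by norm_num, Real.rpow_add hn0,
          Real.rpow_one]]
      rw [hx_def, ← Real.rpow_sub hn0]
      norm_num
    linarith
  have h64 : (n : ℝ) ^ ((6 : ℝ)/4) ≤ (n : ℝ) ^ ((7 : ℝ)/4) :=
    Real.rpow_le_rpow_of_exponent_le hn1 (by norm_num)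
  linarith
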